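/- Let P be the subgroup of U(8,ℂ) generated by {CX₀₁, CX₁₀, CX₁₂, CX₂₁, CCX₀, X₀} and CQ the subgroup generated by {X₁, CX₁₂, CX₂₁, X₀, CX₁₀, CX₂₀, CCX₀}. Then CQ is a subgroup of P of index 105. -/

import Mathlib

noncomputable section
open Matrix Complex

abbrev M8 := Matrix (Fin 8) (Fin 8) ℂ
abbrev U8 := Matrix.unitaryGroup (Fin 8) ℂ

namespace CCS

/-- qubit 0 (most significant bit) of a basis index. -/
def b0 (m : Fin 8) : ℕ := m.val / 4
def b1 (m : Fin 8) : ℕ := m.val / 2 % 2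
def b2 (m : Fin 8) : ℕ := m.val % 2

/-- basis index with qubit values `a`, `b`, `c` (mod 2). -/
def idx (a b c : ℕ) : Fin 8 := ⟨4 * (a % 2) + 2 * (b % 2) + c % 2, by omega⟩

/-- the permutation matrix sending `e_s` to `e_{σ s}`. -/
def permMat (σ : Fin 8 → Fin 8) : M8 := fun r s => if r = σ s then 1 else 0

def q0 (m : Fin 8) : Fin 2 := ⟨b0 m, by simp [b0]; omega⟩
def q1 (m : Fin 8) : Fin 2 := ⟨b1 m, by simp [b1]; omega⟩
def q2 (m : Fin 8) : Fin 2 := ⟨b2 m, by simp [b2]; omega⟩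

def Kmat : Matrix (Fin 2) (Fin 2) ℂ := (1 / (1 + I)) • !![1, 1; 1, -1]
def Smat : Matrix (Fin 2) (Fin 2) ℂ := !![1, 0; 0, I]

/-- `A ⊗ I₂ ⊗ I₂` -/
def K0 : M8 := fun r s => Kmat (q0 r) (q0 s) * (if q1 r = q1 s ∧ q2 r = q2 s then 1 else 0)
def K1 : M8 := fun r s => Kmat (q1 r) (q1 s) * (if q0 r = q0 s ∧ q2 r = q2 s then 1 else 0)
def K2 : M8 := fun r s => Kmat (q2 r) (q2 s) * (if q0 r = q0 s ∧ q1 r = q1 s then 1 else 0)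

def omega8 : M8 := Matrix.diagonal fun _ => I
def S0 : M8 := Matrix.diagonal fun m => I ^ b0 m
def S1 : M8 := Matrix.diagonal fun m => I ^ b1 m
def S2 : M8 := Matrix.diagonal fun m => I ^ b2 m
def CS01 : M8 := Matrix.diagonal fun m => I ^ (b0 m * b1 m)
def CS12 : M8 := Matrix.diagonal fun m => I ^ (b1 m * b2 m)
def CS02 : M8 := Matrix.diagonal fun m => I ^ (b0 m * b2 m)
def CCZ : M8 := Matrix.diagonal fun m => (-1 : ℂ) ^ (b0 m * b1 m * b2 m)

def X0 : M8 := permMat fun m => idx (b0 m + 1) (b1 m) (b2 m)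
def X1 : M8 := permMat fun m => idx (b0 m) (b1 m + 1) (b2 m)
def X2 : M8 := permMat fun m => idx (b0 m) (b1 m) (b2 m + 1)
def CX01 : M8 := permMat fun m => idx (b0 m) (b1 m + b0 m) (b2 m)
def CX10 : M8 := permMat fun m => idx (b0 m + b1 m) (b1 m) (b2 m)
def CX12 : M8 := permMat fun m => idx (b0 m) (b1 m) (b2 m + b1 m)
def CX21 : M8 := permMat fun m => idx (b0 m) (b1 m + b2 m) (b2 m)
def CX02 : M8 := permMat fun m => idx (b0 m) (b1 m) (b2 m + b0 m)
def CX20 : M8 := permMat fun m => idx (b0 m + b2 m) (b1 m) (b2 m)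
def CCX0 : M8 := permMat fun m => idx (b0 m + b1 m * b2 m) (b1 m) (b2 m)
def Swap01 : M8 := permMat fun m => idx (b1 m) (b0 m) (b2 m)
def Swap12 : M8 := permMat fun m => idx (b0 m) (b2 m) (b1 m)

/-- The ring ℤ[1/2, i]. -/
def Zhi : Subring ℂ := Subring.closure {1 / 2, I}

/-- The 3-qubit Clifford+CS group, as a subgroup of U(8,ℂ). -/
def CliffordCS3 : Subgroup U8 :=
  Subgroup.closure {u : U8 | (u : M8) ∈ ({omega8, K0, K1, K2, S0, S1, S2, CS01, CS12} : Set M8)}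

end CCS

noncomputable section
open CCS

/-- The subgroup `P = ⟨CX₀₁, CX₁₀, CX₁₂, CX₂₁, CCX₀, X₀⟩` of U(8,ℂ). -/
def Pgrp : Subgroup U8 :=
  Subgroup.closure {u : U8 | (u : M8) ∈ ({CX01, CX10, CX12, CX21, CCX0, X0} : Set M8)}

/-- The subgroup `CQ = ⟨X₁, CX₁₂, CX₂₁, X₀, CX₁₀, CX₂₀, CCX₀⟩` of U(8,ℂ). -/
def CQgrp : Subgroup U8 :=
  Subgroup.closure {u : U8 | (u : M8) ∈
    ({X1, CX12, CX21, X0, CX10, CX20, CCX0} : Set M8)}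


namespace CQPf
open Equiv

abbrev G8 := Equiv.Perm (Fin 8)

def mkp (v : Fin 8 → Fin 8) (h : ∀ m, v (v m) = m) : G8 := ⟨v, v, h, h⟩
def mkq (v : Fin 4 → Fin 4) (h : ∀ m, v (v m) = m) : Equiv.Perm (Fin 4) := ⟨v, v, h, h⟩

def pX0 : G8 := mkp ![4,5,6,7,0,1,2,3] (by decide)
def pX1 : G8 := mkp ![2,3,0,1,6,7,4,5] (by decide)
def pCX01 : G8 := mkp ![0,1,2,3,6,7,4,5] (by decide)
def pCX10 : G8 := mkp ![0,1,6,7,4,5,2,3] (by decide)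
def pCX12 : G8 := mkp ![0,1,3,2,4,5,7,6] (by decide)
def pCX21 : G8 := mkp ![0,3,2,1,4,7,6,5] (by decide)
def pCX20 : G8 := mkp ![0,5,2,7,4,1,6,3] (by decide)
def pCCX0 : G8 := mkp ![0,1,2,7,4,5,6,3] (by decide)

lemma hmX0 : X0 = permMat ⇑pX0 := congrArg permMat (funext (by decide))
lemma hmX1 : X1 = permMat ⇑pX1 := congrArg permMat (funext (by decide))
lemma hmCX01 : CX01 = permMat ⇑pCX01 := congrArg permMat (funext (by decide))
lemma hmCX10 : CX10 = permMat ⇑pCX10 := congrArg permMat (funext (by decide))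
lemma hmCX12 : CX12 = permMat ⇑pCX12 := congrArg permMat (funext (by decide))
lemma hmCX21 : CX21 = permMat ⇑pCX21 := congrArg permMat (funext (by decide))
lemma hmCX20 : CX20 = permMat ⇑pCX20 := congrArg permMat (funext (by decide))
lemma hmCCX0 : CCX0 = permMat ⇑pCCX0 := congrArg permMat (funext (by decide))

lemma permMat_mul (σ τ : Fin 8 → Fin 8) : permMat (σ ∘ τ) = permMat σ * permMat τ := by
  ext r s
  simp only [Matrix.mul_apply, permMat, Function.comp]
  rw [Finset.sum_eq_single (τ s)]
  · simp
  · intro k _ hk; simp [hk]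
  · simp

lemma permMat_one : permMat id = 1 := by
  ext r s; simp [permMat, Matrix.one_apply]

lemma permMat_inv_mul (σ : G8) : permMat ⇑σ⁻¹ * permMat ⇑σ = 1 := by
  rw [← permMat_mul]
  have : (⇑σ⁻¹ ∘ ⇑σ) = id := funext fun m => σ.symm_apply_apply m
  rw [this, permMat_one]

lemma permMat_star (σ : G8) : star (permMat ⇑σ) = permMat ⇑σ⁻¹ := by
  ext r s
  simp only [Matrix.star_apply, permMat, apply_ite (star : ℂ → ℂ), star_one, star_zero]
  by_cases h : s = σ r
  · rw [if_pos h, if_pos (by rw [h]; exact (σ.symm_apply_apply r).symm)]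
  · rw [if_neg h, if_neg (fun hr => h (by rw [hr]; exact (σ.apply_symm_apply s).symm))]

def φ : G8 →* U8 where
  toFun σ := ⟨permMat ⇑σ, by
    rw [Matrix.mem_unitaryGroup_iff']
    rw [permMat_star, permMat_inv_mul]⟩
  map_one' := Subtype.ext (by
    show permMat ⇑(1 : G8) = 1
    rw [show ⇑(1 : G8) = id from rfl, permMat_one])
  map_mul' a b := Subtype.ext (by
    show permMat ⇑(a * b) = permMat ⇑a * permMat ⇑b
    rw [show ⇑(a * b) = ⇑a ∘ ⇑b from rfl, permMat_mul])

lemma φ_coe (σ : G8) : ((φ σ : U8) : M8) = permMat ⇑σ := rfl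

lemma φ_inj : Function.Injective ⇑φ := by
  intro a b h
  have h2 : permMat ⇑a = permMat ⇑b := congrArg Subtype.val h
  apply Equiv.ext; intro s
  by_contra hne
  have h3 := congrFun (congrFun h2 (a s)) s
  simp only [permMat, if_pos rfl, if_neg hne] at h3
  exact one_ne_zero h3

def genP : Set G8 := {pCX01, pCX10, pCX12, pCX21, pCCX0, pX0}
def genQ : Set G8 := {pX1, pCX12, pCX21, pX0, pCX10, pCX20, pCCX0}

def P' : Subgroup G8 := Subgroup.closure genP
def CQ' : Subgroup G8 := Subgroup.closure genQ

lemma Pgrp_eq : Pgrp = Subgroup.map φ P' := by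
  rw [P', MonoidHom.map_closure, Pgrp]
  congr 1
  ext u
  simp only [Set.mem_setOf_eq, Set.mem_insert_iff, Set.mem_singleton_iff, Set.mem_image,
    genP, hmCX01, hmCX10, hmCX12, hmCX21, hmCCX0, hmX0]
  constructor
  · rintro (h|h|h|h|h|h)
    · exact ⟨pCX01, Or.inl rfl, Subtype.ext h.symm⟩
    · exact ⟨pCX10, Or.inr (Or.inl rfl), Subtype.ext h.symm⟩
    · exact ⟨pCX12, Or.inr (Or.inr (Or.inl rfl)), Subtype.ext h.symm⟩
    · exact ⟨pCX21, Or.inr (Or.inr (Or.inr (Or.inl rfl))), Subtype.ext h.symm⟩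
    · exact ⟨pCCX0, Or.inr (Or.inr (Or.inr (Or.inr (Or.inl rfl)))), Subtype.ext h.symm⟩
    · exact ⟨pX0, Or.inr (Or.inr (Or.inr (Or.inr (Or.inr rfl)))), Subtype.ext h.symm⟩
  · rintro ⟨p, (rfl|rfl|rfl|rfl|rfl|rfl), rfl⟩
    · exact Or.inl rfl
    · exact Or.inr (Or.inl rfl)
    · exact Or.inr (Or.inr (Or.inl rfl))
    · exact Or.inr (Or.inr (Or.inr (Or.inl rfl)))
    · exact Or.inr (Or.inr (Or.inr (Or.inr (Or.inl rfl))))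
    · exact Or.inr (Or.inr (Or.inr (Or.inr (Or.inr rfl))))

lemma CQgrp_eq : CQgrp = Subgroup.map φ CQ' := by
  rw [CQ', MonoidHom.map_closure, CQgrp]
  congr 1
  ext u
  simp only [Set.mem_setOf_eq, Set.mem_insert_iff, Set.mem_singleton_iff, Set.mem_image,
    genQ, hmX1, hmCX12, hmCX21, hmX0, hmCX10, hmCX20, hmCCX0]
  constructor
  · rintro (h|h|h|h|h|h|h)
    · exact ⟨pX1, Or.inl rfl, Subtype.ext h.symm⟩
    · exact ⟨pCX12, Or.inr (Or.inl rfl), Subtype.ext h.symm⟩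
    · exact ⟨pCX21, Or.inr (Or.inr (Or.inl rfl)), Subtype.ext h.symm⟩
    · exact ⟨pX0, Or.inr (Or.inr (Or.inr (Or.inl rfl))), Subtype.ext h.symm⟩
    · exact ⟨pCX10, Or.inr (Or.inr (Or.inr (Or.inr (Or.inl rfl)))), Subtype.ext h.symm⟩
    · exact ⟨pCX20, Or.inr (Or.inr (Or.inr (Or.inr (Or.inr (Or.inl rfl))))), Subtype.ext h.symm⟩
    · exact ⟨pCCX0, Or.inr (Or.inr (Or.inr (Or.inr (Or.inr (Or.inr rfl))))), Subtype.ext h.symm⟩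
  · rintro ⟨p, (rfl|rfl|rfl|rfl|rfl|rfl|rfl), rfl⟩
    · exact Or.inl rfl
    · exact Or.inr (Or.inl rfl)
    · exact Or.inr (Or.inr (Or.inl rfl))
    · exact Or.inr (Or.inr (Or.inr (Or.inl rfl)))
    · exact Or.inr (Or.inr (Or.inr (Or.inr (Or.inl rfl))))
    · exact Or.inr (Or.inr (Or.inr (Or.inr (Or.inr (Or.inl rfl)))))
    · exact Or.inr (Or.inr (Or.inr (Or.inr (Or.inr (Or.inr rfl)))))

/-! ### P' is the full symmetric group -/

def s8 : G8 := pCX01 * pX0 * pCCX0 * pCX12 * pCX21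

lemma s8_sc (k : ℕ) (y : Fin 8) (h : (s8 ^ k) 0 = y) : s8.SameCycle 0 y :=
  ⟨(k : ℤ), by rw [zpow_natCast]; exact h⟩

lemma s8_isCycle : s8.IsCycle := by
  refine ⟨0, by decide, fun y _ => ?_⟩
  fin_cases y
  · exact s8_sc 0 _ (by decide)
  · exact s8_sc 6 _ (by decide)
  · exact s8_sc 3 _ (by decide)
  · exact s8_sc 4 _ (by decide)
  · exact s8_sc 7 _ (by decide)
  · exact s8_sc 2 _ (by decide)
  · exact s8_sc 1 _ (by decide)
  · exact s8_sc 5 _ (by decide)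

lemma s8_support : s8.support = Finset.univ := by decide

lemma s8_mem : s8 ∈ P' := by
  have h : ∀ x ∈ genP, x ∈ P' := fun x hx => Subgroup.subset_closure hx
  exact mul_mem (mul_mem (mul_mem (mul_mem
    (h pCX01 (Or.inl rfl)) (h pX0 (Or.inr (Or.inr (Or.inr (Or.inr (Or.inr rfl)))))))
    (h pCCX0 (Or.inr (Or.inr (Or.inr (Or.inr (Or.inl rfl)))))))
    (h pCX12 (Or.inr (Or.inr (Or.inl rfl)))))
    (h pCX21 (Or.inr (Or.inr (Or.inr (Or.inl rfl)))))

lemma P'_top : P' = ⊤ := by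
  rw [eq_top_iff, ← Equiv.Perm.closure_cycle_adjacent_swap s8_isCycle s8_support 3]
  rw [show Equiv.swap (3 : Fin 8) (s8 3) = pCCX0 from by decide]
  refine (Subgroup.closure_le _).mpr ?_
  rintro x hx
  rcases hx with rfl | rfl
  · exact s8_mem
  · exact Subgroup.subset_closure (Or.inr (Or.inr (Or.inr (Or.inr (Or.inl rfl)))))

/-! ### structure of the centralizer of pX0 -/

def lo (m : Fin 8) : Fin 4 := ⟨m.val % 4, Nat.mod_lt _ (by norm_num)⟩
def hi (m : Fin 8) : Bool := decide (4 ≤ m.val)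
def cmb (a : Bool) (b : Fin 4) : Fin 8 :=
  ⟨(cond a 4 0) + b.val, by have := b.isLt; cases a <;> simp <;> omega⟩

lemma lo_cmb : ∀ a b, lo (cmb a b) = b := by decide
lemma hi_cmb : ∀ a b, hi (cmb a b) = a := by decide
lemma cmb_hi_lo : ∀ m, cmb (hi m) (lo m) = m := by decide
lemma pX0_cmb : ∀ a b, pX0 (cmb a b) = cmb (!a) b := by decide
lemma cmb_inj : ∀ a b a' b', cmb a b = cmb a' b' → a = a' ∧ b = b' := by decide
lemma lo_cases : ∀ x y : Fin 8, lo x = lo y → x = y ∨ x = pX0 y := by decide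
lemma hi_false_eq : ∀ m, hi m = false → m = cmb false (lo m) := by decide
lemma hi_true_eq : ∀ m, hi m = true → m = pX0 (cmb false (lo m)) := by decide

def Lp (π : Equiv.Perm (Fin 4)) : G8 :=
  ⟨fun m => cmb (hi m) (π (lo m)), fun m => cmb (hi m) (π.symm (lo m)),
   fun m => by simp only [hi_cmb, lo_cmb, Equiv.symm_apply_apply, cmb_hi_lo],
   fun m => by simp only [hi_cmb, lo_cmb, Equiv.apply_symm_apply, cmb_hi_lo]⟩

lemma Lp_apply (π : Equiv.Perm (Fin 4)) (m : Fin 8) : Lp π m = cmb (hi m) (π (lo m)) := rfl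

def Lhom : Equiv.Perm (Fin 4) →* G8 where
  toFun := Lp
  map_one' := Equiv.ext fun m => by
    simp only [Lp_apply, Equiv.Perm.coe_one, id_eq, cmb_hi_lo]
  map_mul' π ρ := Equiv.ext fun m => by
    simp only [Equiv.Perm.mul_apply, Lp_apply, hi_cmb, lo_cmb]

def q1 : Equiv.Perm (Fin 4) := mkq ![2,3,0,1] (by decide)
def q2 : Equiv.Perm (Fin 4) := mkq ![0,1,3,2] (by decide)
def q3 : Equiv.Perm (Fin 4) := mkq ![0,3,2,1] (by decide)

lemma Lq1 : Lp q1 = pX1 := by decide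
lemma Lq2 : Lp q2 = pCX12 := by decide
lemma Lq3 : Lp q3 = pCX21 := by decide

def s4 : Equiv.Perm (Fin 4) := q3 * q2 * q1 * q2

lemma s4_sc (k : ℕ) (y : Fin 4) (h : (s4 ^ k) 0 = y) : s4.SameCycle 0 y :=
  ⟨(k : ℤ), by rw [zpow_natCast]; exact h⟩

lemma s4_isCycle : s4.IsCycle := by
  refine ⟨0, by decide, fun y _ => ?_⟩
  fin_cases y
  · exact s4_sc 0 _ (by decide)
  · exact s4_sc 1 _ (by decide)
  · exact s4_sc 2 _ (by decide)
  · exact s4_sc 3 _ (by decide)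

lemma s4_support : s4.support = Finset.univ := by decide

lemma top4 : Subgroup.closure ({q1, q2, q3} : Set (Equiv.Perm (Fin 4))) = ⊤ := by
  rw [eq_top_iff, ← Equiv.Perm.closure_cycle_adjacent_swap s4_isCycle s4_support 2]
  rw [show Equiv.swap (2 : Fin 4) (s4 2) = q2 from by decide]
  refine (Subgroup.closure_le _).mpr ?_
  have h : ∀ x ∈ ({q1, q2, q3} : Set (Equiv.Perm (Fin 4))), x ∈ Subgroup.closure ({q1, q2, q3} : Set (Equiv.Perm (Fin 4))) :=
    fun x hx => Subgroup.subset_closure hx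
  rintro x hx
  rcases hx with rfl | rfl
  · exact mul_mem (mul_mem (mul_mem (h q3 (Or.inr (Or.inr rfl))) (h q2 (Or.inr (Or.inl rfl))))
      (h q1 (Or.inl rfl))) (h q2 (Or.inr (Or.inl rfl)))
  · exact h q2 (Or.inr (Or.inl rfl))

lemma Lp_mem (π : Equiv.Perm (Fin 4)) : Lp π ∈ CQ' := by
  have hle : Subgroup.closure ({q1, q2, q3} : Set (Equiv.Perm (Fin 4))) ≤ CQ'.comap Lhom := by
    refine (Subgroup.closure_le _).mpr ?_
    have hq1 : q1 ∈ CQ'.comap Lhom := by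
      rw [Subgroup.mem_comap, show Lhom q1 = pX1 from Lq1]
      exact Subgroup.subset_closure (Or.inl rfl)
    have hq2 : q2 ∈ CQ'.comap Lhom := by
      rw [Subgroup.mem_comap, show Lhom q2 = pCX12 from Lq2]
      exact Subgroup.subset_closure (Or.inr (Or.inl rfl))
    have hq3 : q3 ∈ CQ'.comap Lhom := by
      rw [Subgroup.mem_comap, show Lhom q3 = pCX21 from Lq3]
      exact Subgroup.subset_closure (Or.inr (Or.inr (Or.inl rfl)))
    rintro x hx
    rcases hx with rfl | rfl | rfl
    exacts [hq1, hq2, hq3]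
  have := hle (top4 ▸ Subgroup.mem_top π)
  exact Subgroup.mem_comap.mp this

def Dg (f : Fin 4 → Bool) : G8 :=
  ⟨fun m => cmb (xor (f (lo m)) (hi m)) (lo m),
   fun m => cmb (xor (f (lo m)) (hi m)) (lo m),
   fun m => by
    simp only [lo_cmb, hi_cmb]
    rw [← Bool.xor_assoc, Bool.xor_self, Bool.false_xor, cmb_hi_lo],
   fun m => by
    simp only [lo_cmb, hi_cmb]
    rw [← Bool.xor_assoc, Bool.xor_self, Bool.false_xor, cmb_hi_lo]⟩

lemma Dg_apply (f : Fin 4 → Bool) (m : Fin 8) :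
    Dg f m = cmb (xor (f (lo m)) (hi m)) (lo m) := rfl

def Wb (e0 e1 e2 e3 : Bool) : G8 :=
  (cond e0 pX0 1) * (cond e1 pCX10 1) * (cond e2 pCX20 1) * (cond e3 pCCX0 1)

lemma Dg_eq_W (f : Fin 4 → Bool) :
    Dg f = Wb (f 0) (xor (f 2) (f 0)) (xor (f 1) (f 0))
      (xor (xor (f 3) (f 2)) (xor (f 1) (f 0))) := by
  obtain ⟨a, b, c, d, rfl⟩ : ∃ a b c d, f = ![a, b, c, d] :=
    ⟨f 0, f 1, f 2, f 3, by funext i; fin_cases i <;> rfl⟩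
  cases a <;> cases b <;> cases c <;> cases d <;> decide

lemma cond_mem {x : G8} (h : x ∈ CQ') (e : Bool) : (cond e x 1) ∈ CQ' := by
  cases e
  · exact one_mem _
  · exact h

lemma Dg_mem (f : Fin 4 → Bool) : Dg f ∈ CQ' := by
  rw [Dg_eq_W, Wb]
  exact mul_mem (mul_mem (mul_mem
    (cond_mem (Subgroup.subset_closure (Or.inr (Or.inr (Or.inr (Or.inl rfl))))) _)
    (cond_mem (Subgroup.subset_closure (Or.inr (Or.inr (Or.inr (Or.inr (Or.inl rfl)))))) _))
    (cond_mem (Subgroup.subset_closure (Or.inr (Or.inr (Or.inr (Or.inr (Or.inr (Or.inl rfl))))))) _))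
    (cond_mem (Subgroup.subset_closure (Or.inr (Or.inr (Or.inr (Or.inr (Or.inr (Or.inr rfl))))))) _)

lemma cent_decomp {σ : G8} (hσ : σ ∈ Subgroup.centralizer ({pX0} : Set G8)) :
    ∃ (π : Equiv.Perm (Fin 4)) (g : Fin 4 → Bool), σ = Dg g * Lp π := by
  have hcm := Subgroup.mem_centralizer_iff.mp hσ pX0 rfl
  have hc : ∀ m, σ (pX0 m) = pX0 (σ m) := fun m => by
    have := congrFun (congrArg (fun (e : G8) => (e : Fin 8 → Fin 8)) hcm) m
    simpa using this.symm
  set π0 : Fin 4 → Fin 4 := fun b => lo (σ (cmb false b)) with hπ0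
  set g : Fin 4 → Bool := fun b => hi (σ (cmb false b)) with hg
  have hval : ∀ b, σ (cmb false b) = cmb (g b) (π0 b) := fun b => (cmb_hi_lo _).symm
  have hinj : Function.Injective π0 := by
    intro b b' h
    rcases lo_cases _ _ h with h2 | h2
    · have h3 := σ.injective h2
      exact (cmb_inj _ _ _ _ h3).2
    · exfalso
      rw [← hc] at h2
      have h3 := σ.injective h2
      rw [pX0_cmb] at h3
      exact absurd (cmb_inj _ _ _ _ h3).1 (by simp)
  let π : Equiv.Perm (Fin 4) := Equiv.ofBijective π0 (Finite.injective_iff_bijective.mp hinj)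
  have hπ : ∀ b, π b = π0 b := fun b => rfl
  have hsymm : ∀ b, π.symm (π0 b) = b := fun b => by
    rw [← hπ]; exact π.symm_apply_apply b
  refine ⟨π, fun b => g (π.symm b), Equiv.ext fun m => ?_⟩
  rw [Equiv.Perm.mul_apply]
  rcases hhi : hi m with _ | _
  · rw [hi_false_eq m hhi, hval, Dg_apply, Lp_apply]
    simp only [lo_cmb, hi_cmb, Equiv.symm_apply_apply, Bool.xor_false, hπ, hsymm]
  · rw [hi_true_eq m hhi, hc, hval, pX0_cmb, Dg_apply, Lp_apply]
    simp only [lo_cmb, hi_cmb, pX0_cmb, Equiv.symm_apply_apply, Bool.xor_true, Bool.not_false, hπ, hsymm]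

lemma CQ'_le_cent : CQ' ≤ Subgroup.centralizer ({pX0} : Set G8) := by
  refine (Subgroup.closure_le _).mpr ?_
  rintro x hx
  rcases hx with rfl | rfl | rfl | rfl | rfl | rfl | rfl <;>
    exact Subgroup.mem_centralizer_iff.mpr (fun h hh => by rw [Set.mem_singleton_iff] at hh; subst hh; decide)

lemma cent_le_CQ' : Subgroup.centralizer ({pX0} : Set G8) ≤ CQ' := by
  intro σ hσ
  obtain ⟨π, g, rfl⟩ := cent_decomp hσ
  exact mul_mem (Dg_mem g) (Lp_mem π)

lemma CQ'_eq_cent : CQ' = Subgroup.centralizer ({pX0} : Set G8) :=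
  le_antisymm CQ'_le_cent cent_le_CQ'

/-! ### cardinality of the centralizer -/

def Emap (pg : Equiv.Perm (Fin 4) × (Fin 4 → Bool)) :
    Subgroup.centralizer ({pX0} : Set G8) :=
  ⟨Dg pg.2 * Lp pg.1, CQ'_le_cent (mul_mem (Dg_mem pg.2) (Lp_mem pg.1))⟩

lemma Emap_key (π : Equiv.Perm (Fin 4)) (g : Fin 4 → Bool) (b : Fin 4) :
    (Dg g * Lp π) (cmb false b) = cmb (g (π b)) (π b) := by
  rw [Equiv.Perm.mul_apply, Lp_apply, hi_cmb, lo_cmb, Dg_apply, hi_cmb, lo_cmb, Bool.xor_false]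

lemma Emap_inj : Function.Injective Emap := by
  rintro ⟨π, g⟩ ⟨π', g'⟩ h
  have h2 : Dg g * Lp π = Dg g' * Lp π' := congrArg Subtype.val h
  have hb : ∀ b, cmb (g (π b)) (π b) = cmb (g' (π' b)) (π' b) := fun b => by
    rw [← Emap_key, ← Emap_key, h2]
  have hπ : π = π' := Equiv.ext fun b => (cmb_inj _ _ _ _ (hb b)).2
  subst hπ
  have hg : g = g' := funext fun b => by
    obtain ⟨b', rfl⟩ := π.surjective b
    exact (cmb_inj _ _ _ _ (hb b')).1
  rw [hg]

lemma Emap_surj : Function.Surjective Emap := by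
  rintro ⟨σ, hσ⟩
  obtain ⟨π, g, h⟩ := cent_decomp hσ
  exact ⟨(π, g), Subtype.ext h.symm⟩

lemma card_cent : Nat.card (Subgroup.centralizer ({pX0} : Set G8)) = 384 := by
  rw [← Nat.card_congr (Equiv.ofBijective Emap ⟨Emap_inj, Emap_surj⟩)]
  rw [Nat.card_prod, Nat.card_eq_fintype_card, Nat.card_eq_fintype_card, Fintype.card_perm]
  simp [Fintype.card_fun]
  rfl

lemma card_G8 : Nat.card G8 = 40320 := by
  rw [Nat.card_eq_fintype_card, Fintype.card_perm, Fintype.card_fin]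
  rfl

lemma CQ'_index : CQ'.index = 105 := by
  rw [CQ'_eq_cent]
  have h := Subgroup.index_mul_card (Subgroup.centralizer ({pX0} : Set G8))
  rw [card_G8, card_cent] at h
  generalize (Subgroup.centralizer ({pX0} : Set G8)).index = n at h ⊢
  omega

end CQPf

open CQPf in

/-- `CQ` is a subgroup of `P` of index 105. -/
theorem CQ_index_in_P : CQgrp ≤ Pgrp ∧ CQgrp.relIndex Pgrp = 105 := by
  constructor
  · rw [Pgrp_eq, CQgrp_eq]
    exact Subgroup.map_mono (by rw [P'_top]; exact le_top)
  · rw [Pgrp_eq, CQgrp_eq, ← Subgroup.relIndex_comap,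
      Subgroup.comap_map_eq_self_of_injective φ_inj, P'_top,
      Subgroup.relIndex_top_right, CQ'_index]
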